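/- If α_i + β_j ≠ 0 for all i, j, then the Sylvester operator S(X) = AX + XB is invertible and its inverse is S⁻¹(X) = U ((1/(α_i + β_j))_{i,j} ⊙ (U⁻¹ X V⁻ᴴ)) Vᴴ. -/

import Mathlib

open Matrix

/-- if all α_i + β_j ≠ 0 then S(X) = AX + XB is invertible with inverse
S⁻¹(X) = U ((1/(α_i + β_j))_{i,j} ⊙ U⁻¹ X V⁻ᴴ) Vᴴ. -/
theorem stmt7 {n m : ℕ} (A U : Matrix (Fin n) (Fin n) ℂ) (B V : Matrix (Fin m) (Fin m) ℂ)
    (α : Fin n → ℂ) (β : Fin m → ℂ)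
    (hU : IsUnit U.det) (hV : IsUnit V.det)
    (hA : A = U * Matrix.diagonal α * U⁻¹)
    (hB : Bᴴ = V * Matrix.diagonal (fun j => starRingEnd ℂ (β j)) * V⁻¹)
    (hαβ : ∀ i j, α i + β j ≠ 0) :
    Function.Bijective (fun X : Matrix (Fin n) (Fin m) ℂ => A * X + X * B) ∧
    ∀ X : Matrix (Fin n) (Fin m) ℂ,
      (let T := fun Y : Matrix (Fin n) (Fin m) ℂ =>
        U * ((Matrix.of fun i j => (α i + β j)⁻¹) ⊙ (U⁻¹ * Y * (V⁻¹)ᴴ)) * Vᴴ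
       A * T X + T X * B = X ∧ T (A * X + X * B) = X) := by
  set C : Matrix (Fin n) (Fin m) ℂ := Matrix.of fun i j => (α i + β j)⁻¹ with hC
  have hUU : U * U⁻¹ = 1 := Matrix.mul_nonsing_inv U hU
  have hUU' : U⁻¹ * U = 1 := Matrix.nonsing_inv_mul U hU
  have hVV : V * V⁻¹ = 1 := Matrix.mul_nonsing_inv V hV
  have hVV' : V⁻¹ * V = 1 := Matrix.nonsing_inv_mul V hV
  have hVH : Vᴴ * (V⁻¹)ᴴ = 1 := by
    rw [← Matrix.conjTranspose_mul, hVV', Matrix.conjTranspose_one]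
  have hVH' : (V⁻¹)ᴴ * Vᴴ = 1 := by
    rw [← Matrix.conjTranspose_mul, hVV, Matrix.conjTranspose_one]
  have hAU : A * U = U * Matrix.diagonal α := by
    rw [hA, Matrix.mul_assoc, hUU', Matrix.mul_one]
  have hUA : U⁻¹ * A = Matrix.diagonal α * U⁻¹ := by
    rw [hA, ← Matrix.mul_assoc, ← Matrix.mul_assoc, hUU', Matrix.one_mul]
  have hBc : B = (V⁻¹)ᴴ * Matrix.diagonal β * Vᴴ := by
    have h := congrArg Matrix.conjTranspose hB
    simp only [Matrix.conjTranspose_conjTranspose, Matrix.conjTranspose_mul,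
      Matrix.diagonal_conjTranspose] at h
    have hstar : (star fun j => (starRingEnd ℂ) (β j)) = β := by funext j; simp
    rw [hstar] at h
    rw [h, ← Matrix.mul_assoc]
  have hVB : Vᴴ * B = Matrix.diagonal β * Vᴴ := by
    rw [hBc, ← Matrix.mul_assoc, ← Matrix.mul_assoc, hVH, Matrix.one_mul]
  have hBV : B * (V⁻¹)ᴴ = (V⁻¹)ᴴ * Matrix.diagonal β := by
    rw [hBc, Matrix.mul_assoc, hVH, Matrix.mul_one]
  have key1 : ∀ M : Matrix (Fin n) (Fin m) ℂ,
      Matrix.diagonal α * (C ⊙ M) + (C ⊙ M) * Matrix.diagonal β = M := by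
    intro M; ext i j
    simp only [Matrix.add_apply, Matrix.diagonal_mul, Matrix.mul_diagonal,
      Matrix.hadamard_apply, hC, Matrix.of_apply]
    field_simp [hαβ i j]
  have key2 : ∀ M : Matrix (Fin n) (Fin m) ℂ,
      C ⊙ (Matrix.diagonal α * M + M * Matrix.diagonal β) = M := by
    intro M; ext i j
    simp only [Matrix.add_apply, Matrix.diagonal_mul, Matrix.mul_diagonal,
      Matrix.hadamard_apply, hC, Matrix.of_apply]
    field_simp [hαβ i j]
  have hcancel : ∀ M : Matrix (Fin n) (Fin m) ℂ,
      U * (U⁻¹ * M * (V⁻¹)ᴴ) * Vᴴ = M := by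
    intro M
    simp only [Matrix.mul_assoc]
    rw [hVH', Matrix.mul_one, ← Matrix.mul_assoc, hUU, Matrix.one_mul]
  set T : Matrix (Fin n) (Fin m) ℂ → Matrix (Fin n) (Fin m) ℂ :=
    fun Y => U * (C ⊙ (U⁻¹ * Y * (V⁻¹)ᴴ)) * Vᴴ with hT
  have main1 : ∀ X : Matrix (Fin n) (Fin m) ℂ, A * T X + T X * B = X := by
    intro X
    set Y : Matrix (Fin n) (Fin m) ℂ := U⁻¹ * X * (V⁻¹)ᴴ with hY
    have h1 : A * T X = U * (Matrix.diagonal α * (C ⊙ Y)) * Vᴴ := by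
      rw [hT, ← Matrix.mul_assoc, ← Matrix.mul_assoc, hAU, Matrix.mul_assoc U]
    have h2 : T X * B = U * ((C ⊙ Y) * Matrix.diagonal β) * Vᴴ := by
      rw [hT, Matrix.mul_assoc, hVB, ← Matrix.mul_assoc, Matrix.mul_assoc U]
    rw [h1, h2, ← Matrix.add_mul, ← Matrix.mul_add, key1, hY, hcancel]
  have main2 : ∀ X : Matrix (Fin n) (Fin m) ℂ, T (A * X + X * B) = X := by
    intro X
    have hinner : U⁻¹ * (A * X + X * B) * (V⁻¹)ᴴ =
        Matrix.diagonal α * (U⁻¹ * X * (V⁻¹)ᴴ) + (U⁻¹ * X * (V⁻¹)ᴴ) * Matrix.diagonal β := by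
      rw [Matrix.mul_add, Matrix.add_mul]
      congr 1
      · simp only [← Matrix.mul_assoc]
        rw [hUA]
      · simp only [Matrix.mul_assoc, hBV]
    rw [hT]
    simp only [hinner, key2]
    exact hcancel X
  refine ⟨Function.bijective_iff_has_inverse.mpr ⟨T, fun X => main2 X, fun X => main1 X⟩,
    fun X => ⟨main1 X, main2 X⟩⟩
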